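/- For g ∈ G, the composite Γ_{P_{g·x}} ∘ ¥_x equals the map A ↦ U_S(g) A U_S(g)*, and this map is a C*-algebra isomorphism from B(H_S)^{G_x} onto B(H_S)^{G_{g·x}}. -/

import Mathlib

open scoped TensorProduct
noncomputable section

/-- `L²(X)`: the complex Hilbert space of functions `X → ℂ`. -/
abbrev L2 (X : Type*) [Fintype X] := EuclideanSpace ℂ X

/-- The permutation representation of `G` on `L²(X)`, `(g·f)(x) = f(g⁻¹·x)`, as a linear map. -/
def UR_lin {G X : Type*} [Group G] [Fintype X] [MulAction G X] (g : G) :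
    L2 X →ₗ[ℂ] L2 X where
  toFun f := WithLp.toLp 2 (fun y => f (g⁻¹ • y))
  map_add' f₁ f₂ := by ext y; simp
  map_smul' c f := by ext y; simp

/-- The permutation (unitary) representation of `G` on `L²(X)`. -/
def UR (G X : Type*) [Group G] [Fintype X] [MulAction G X] :
    G →* (L2 X →L[ℂ] L2 X) where
  toFun g := (UR_lin g).toContinuousLinearMap
  map_one' := by ext f y; simp [UR_lin]
  map_mul' g h := by ext f y; simp [UR_lin, mul_smul]

/-- The indicator function `δ_y ∈ L²(X)`. -/
def delta {X : Type*} [Fintype X] [DecidableEq X] (y : X) : L2 X :=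
  EuclideanSpace.single y (1:ℂ)

/-- The rank-one projection onto the indicator function `δ_y`. -/
def Pproj {X : Type*} [Fintype X] [DecidableEq X] (y : X) : L2 X →L[ℂ] L2 X :=
  (innerSL ℂ (delta y)).smulRight (delta y)

/-- Invariance of an operator under a subgroup, `U_S(h) A U_S(h)⁻¹ = A` for all `h ∈ S`. -/
def InvUnder {G HS : Type*} [Group G] [NormedAddCommGroup HS] [InnerProductSpace ℂ HS]
    (US : G →* (HS →L[ℂ] HS)) (S : Subgroup G) (A : HS →L[ℂ] HS) : Prop :=
  ∀ h ∈ S, US h * A * US h⁻¹ = A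

/-- The relativisation map `¥ₓ`, with canonical coset representatives. -/
def yen {G X HS : Type*} [Group G] [Finite G] [Fintype X] [DecidableEq X] [MulAction G X]
    [NormedAddCommGroup HS] [InnerProductSpace ℂ HS]
    (US : G →* (HS →L[ℂ] HS)) (x : X) (A : HS →L[ℂ] HS) :
    (HS →L[ℂ] HS) ⊗[ℂ] (L2 X →L[ℂ] L2 X) :=
  letI : Fintype (G ⧸ MulAction.stabilizer G x) := Fintype.ofFinite _
  ∑ c : G ⧸ MulAction.stabilizer G x,
    (US c.out * A * US c.out⁻¹) ⊗ₜ[ℂ] Pproj (c.out • x)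

/-- The restriction map `Γ_ω`, determined by `A ⊗ B ↦ tr(ωB) A`. -/
def Gamma {X HS : Type*} [Fintype X] [NormedAddCommGroup HS] [InnerProductSpace ℂ HS]
    (ω : L2 X →L[ℂ] L2 X) :
    (HS →L[ℂ] HS) ⊗[ℂ] (L2 X →L[ℂ] L2 X) →ₗ[ℂ] (HS →L[ℂ] HS) :=
  TensorProduct.lift
    (LinearMap.mk₂ ℂ (fun A B => (LinearMap.trace ℂ (L2 X) ↑(ω * B)) • A)
      (fun A₁ A₂ B => by simp [smul_add])
      (fun c A B => by simp [smul_smul]; ring_nf)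
      (fun A B₁ B₂ => by simp [mul_add, add_smul])
      (fun c A B => by simp [mul_smul_comm, smul_smul]))


lemma trace_Pproj_mul {X : Type*} [Fintype X] [DecidableEq X] (y z : X) :
    LinearMap.trace ℂ (L2 X) ↑(Pproj y * Pproj z) = if y = z then 1 else 0 := by
  rw [LinearMap.trace_eq_matrix_trace ℂ (PiLp.basisFun 2 ℂ X)]
  simp [Matrix.trace, LinearMap.toMatrix_apply, Pproj, delta, ContinuousLinearMap.smulRight_apply,
    EuclideanSpace.single_apply, inner, Finset.sum_ite_eq]
  split <;> simp_all [EuclideanSpace.single_apply] <;> exact fun h => ‹¬z = y› h.symm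

/-- `Γ_{P_{g·x}} ∘ ¥ₓ` equals `A ↦ U_S(g) A U_S(g)⁻¹`, a C*-algebra isomorphism
from `B(H_S)^{G_x}` onto `B(H_S)^{G_{g·x}}`. -/
theorem stmt8 {G X HS : Type*} [Group G] [Finite G] [Fintype X] [DecidableEq X]
    [MulAction G X] [MulAction.IsPretransitive G X]
    [NormedAddCommGroup HS] [InnerProductSpace ℂ HS] [CompleteSpace HS]
    (US : G →* (HS →L[ℂ] HS))
    (hU : ∀ g : G, ContinuousLinearMap.adjoint (US g) = US g⁻¹)
    (x : X) (g : G) :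
    (∀ A : HS →L[ℂ] HS, InvUnder US (MulAction.stabilizer G x) A →
        Gamma (Pproj (g • x)) (yen US x A) = US g * A * US g⁻¹) ∧
    Set.BijOn (fun A : HS →L[ℂ] HS => US g * A * US g⁻¹)
      {A | InvUnder US (MulAction.stabilizer G x) A}
      {A | InvUnder US (MulAction.stabilizer G (g • x)) A} ∧
    (∀ A B : HS →L[ℂ] HS,
        US g * (A * B) * US g⁻¹ = (US g * A * US g⁻¹) * (US g * B * US g⁻¹)) ∧
    (US g * (1 : HS →L[ℂ] HS) * US g⁻¹ = 1) ∧
    (∀ A B : HS →L[ℂ] HS, US g * (A + B) * US g⁻¹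
        = US g * A * US g⁻¹ + US g * B * US g⁻¹) ∧
    (∀ (c : ℂ) (A : HS →L[ℂ] HS), US g * (c • A) * US g⁻¹ = c • (US g * A * US g⁻¹)) ∧
    (∀ A : HS →L[ℂ] HS, US g * star A * US g⁻¹ = star (US g * A * US g⁻¹)) := by
  have Umul : ∀ a b : G, US a * US b = US (a * b) := fun a b => (map_mul US a b).symm
  have Ucan : ∀ a : G, US a⁻¹ * US a = 1 := fun a => by
    rw [Umul, inv_mul_cancel, map_one]
  have Ucan' : ∀ a : G, US a * US a⁻¹ = 1 := fun a => by
    rw [Umul, mul_inv_cancel, map_one]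
  have conj_eq : ∀ (a b : G) (A : HS →L[ℂ] HS),
      US a * (US b * A * US b⁻¹) * US a⁻¹ = US (a * b) * A * US (a * b)⁻¹ := by
    intro a b A
    rw [mul_inv_rev, ← Umul, ← Umul]
    noncomm_ring
  refine ⟨?_, ⟨?_, ?_, ?_⟩, ?_, ?_, ?_, ?_, ?_⟩
  · -- Gamma ∘ yen = conjugation
    intro A hA
    letI : Fintype (G ⧸ MulAction.stabilizer G x) := Fintype.ofFinite _
    rw [yen, map_sum]
    have step : ∀ c : G ⧸ MulAction.stabilizer G x,
        Gamma (Pproj (g • x)) ((US c.out * A * US c.out⁻¹) ⊗ₜ[ℂ] Pproj (c.out • x))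
          = if c = QuotientGroup.mk g then US g * A * US g⁻¹ else 0 := by
      intro c
      have : Gamma (Pproj (g • x)) ((US c.out * A * US c.out⁻¹) ⊗ₜ[ℂ] Pproj (c.out • x))
          = (LinearMap.trace ℂ (L2 X) ↑(Pproj (g • x) * Pproj (c.out • x)))
              • (US c.out * A * US c.out⁻¹) := by
        simp [Gamma]
      rw [this, trace_Pproj_mul]
      by_cases hc : c = QuotientGroup.mk g
      · have hmem : g⁻¹ * c.out ∈ MulAction.stabilizer G x := by
          have : (QuotientGroup.mk g : G ⧸ MulAction.stabilizer G x)
              = QuotientGroup.mk c.out := by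
            rw [← hc]; exact (Quotient.out_eq' c).symm
          exact QuotientGroup.eq.mp this
        have hx : g • x = c.out • x := by
          have h1 : (g⁻¹ * c.out) • x = x := hmem
          calc g • x = g • ((g⁻¹ * c.out) • x) := by rw [h1]
            _ = c.out • x := by rw [← mul_smul, ← mul_assoc, mul_inv_cancel, one_mul]
        have hAc : US c.out * A * US c.out⁻¹ = US g * A * US g⁻¹ := by
          have hout : c.out = g * (g⁻¹ * c.out) := by group
          have := hA _ hmem
          calc US c.out * A * US c.out⁻¹
              = US g * (US (g⁻¹ * c.out) * A * US (g⁻¹ * c.out)⁻¹) * US g⁻¹ := by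
                rw [conj_eq, ← hout]
            _ = US g * A * US g⁻¹ := by rw [this]
        rw [if_pos hc, if_pos hx, hAc, one_smul]
      · have hx : ¬ (g • x = c.out • x) := by
          intro h
          apply hc
          have hmem : g⁻¹ * c.out ∈ MulAction.stabilizer G x := by
            show (g⁻¹ * c.out) • x = x
            rw [mul_smul, ← h, ← mul_smul, inv_mul_cancel, one_smul]
          rw [show c = QuotientGroup.mk c.out from (Quotient.out_eq' c).symm]
          exact (QuotientGroup.eq.mpr hmem).symm
        rw [if_neg hc, if_neg hx, zero_smul]
    rw [Finset.sum_congr rfl (fun c _ => step c)]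
    simp
  · -- MapsTo
    intro A hA h hm
    have hm' : g⁻¹ * h * g ∈ MulAction.stabilizer G x := by
      show (g⁻¹ * h * g) • x = x
      have : h • (g • x) = g • x := hm
      rw [mul_smul, mul_smul, this, ← mul_smul, inv_mul_cancel, one_smul]
    have key := hA _ hm'
    calc US h * (US g * A * US g⁻¹) * US h⁻¹
        = US (h * g) * A * US (h * g)⁻¹ := conj_eq h g A
      _ = US (g * (g⁻¹ * h * g)) * A * US (g * (g⁻¹ * h * g))⁻¹ := by group
      _ = US g * (US (g⁻¹ * h * g) * A * US (g⁻¹ * h * g)⁻¹) * US g⁻¹ :=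
          (conj_eq g (g⁻¹ * h * g) A).symm
      _ = US g * A * US g⁻¹ := by rw [key]
  · -- InjOn
    intro A _ B _ hEq
    have cancel : ∀ C : HS →L[ℂ] HS, US g⁻¹ * (US g * C * US g⁻¹) * US g = C := by
      intro C
      have := conj_eq g⁻¹ g C
      rw [inv_inv] at this
      rw [this, inv_mul_cancel, map_one, one_mul, inv_one, map_one, mul_one]
    change US g * A * US g⁻¹ = US g * B * US g⁻¹ at hEq
    rw [← cancel A, ← cancel B, hEq]
  · -- SurjOn
    intro B hB
    refine ⟨US g⁻¹ * B * US g, ?_, ?_⟩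
    · intro h hm
      have hm' : g * h * g⁻¹ ∈ MulAction.stabilizer G (g • x) := by
        show (g * h * g⁻¹) • (g • x) = g • x
        have : h • x = x := hm
        rw [mul_smul, mul_smul, ← mul_smul g⁻¹ g x, inv_mul_cancel, one_smul, this]
      have key := hB _ hm'
      have e1 : US g⁻¹ * B * US g = US g⁻¹ * B * US (g⁻¹)⁻¹ := by rw [inv_inv]
      calc US h * (US g⁻¹ * B * US g) * US h⁻¹
          = US h * (US g⁻¹ * B * US (g⁻¹)⁻¹) * US h⁻¹ := by rw [e1]
        _ = US (h * g⁻¹) * B * US (h * g⁻¹)⁻¹ := conj_eq h g⁻¹ B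
        _ = US (g⁻¹ * (g * h * g⁻¹)) * B * US (g⁻¹ * (g * h * g⁻¹))⁻¹ := by group
        _ = US g⁻¹ * (US (g * h * g⁻¹) * B * US (g * h * g⁻¹)⁻¹) * US (g⁻¹)⁻¹ :=
            (conj_eq g⁻¹ (g * h * g⁻¹) B).symm
        _ = US g⁻¹ * B * US g := by rw [key, inv_inv]
    · show US g * (US g⁻¹ * B * US g) * US g⁻¹ = B
      calc US g * (US g⁻¹ * B * US g) * US g⁻¹
          = US (g * g⁻¹) * B * US (g * g⁻¹)⁻¹ := by
            rw [← conj_eq]; rw [inv_inv]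
        _ = B := by simp
  · intro A B
    calc US g * (A * B) * US g⁻¹
        = US g * A * (US g⁻¹ * US g) * B * US g⁻¹ := by rw [Ucan]; noncomm_ring
      _ = (US g * A * US g⁻¹) * (US g * B * US g⁻¹) := by noncomm_ring
  · rw [mul_one, Ucan']
  · intro A B; noncomm_ring
  · intro c A
    rw [mul_smul_comm, smul_mul_assoc]
  · intro A
    have hstar : ∀ a : G, star (US a) = US a⁻¹ := fun a => by
      rw [ContinuousLinearMap.star_eq_adjoint, hU]
    rw [star_mul, star_mul, hstar, hstar, inv_inv]
    noncomm_ring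


end
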